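/- Let (X,d) be a complete metric space and T : X → X a map for which there exist real numbers α, β, γ with 0 ≤ α < 1 and 0 ≤ β, γ < 1/2 such that for all x, y ∈ X at least one of the following holds: (i) d(Tx,Ty) ≤ α·d(x,y); (ii) d(Tx,Ty) ≤ β·[d(x,Tx) + d(y,Ty)]; (iii) d(Tx,Ty) ≤ γ·[d(x,Ty) + d(y,Tx)]. Then T has a unique fixed point p, and for every x₀ ∈ X the Picard iteration x_{n+1} = T x_n converges to p. -/
import Mathlib

set_option maxHeartbeats 1000000

theorem stmt_4 {X : Type*} [MetricSpace X] [CompleteSpace X] [Nonempty X]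
    (T : X → X) (α β γ : ℝ)
    (hα0 : 0 ≤ α) (hα1 : α < 1)
    (hβ0 : 0 ≤ β) (hβ1 : β < 1 / 2)
    (hγ0 : 0 ≤ γ) (hγ1 : γ < 1 / 2)
    (h : ∀ x y : X,
      dist (T x) (T y) ≤ α * dist x y ∨
      dist (T x) (T y) ≤ β * (dist x (T x) + dist y (T y)) ∨
      dist (T x) (T y) ≤ γ * (dist x (T y) + dist y (T x))) :
    ∃ p : X, T p = p ∧ (∀ q : X, T q = q → q = p) ∧
      ∀ x₀ : X, Filter.Tendsto (fun n => T^[n] x₀) Filter.atTop (nhds p) := by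
  set c : ℝ := max α (max (β / (1 - β)) (γ / (1 - γ))) with hc
  have hβ1' : (0:ℝ) < 1 - β := by linarith
  have hγ1' : (0:ℝ) < 1 - γ := by linarith
  have hc0 : 0 ≤ c := le_trans hα0 (le_max_left _ _)
  have hc1 : c < 1 := by
    apply max_lt hα1
    apply max_lt
    · rw [div_lt_one hβ1']; linarith
    · rw [div_lt_one hγ1']; linarith
  -- per-step contraction
  have hstep : ∀ x : X, dist (T x) (T (T x)) ≤ c * dist x (T x) := by
    intro x
    set a := dist x (T x) with ha
    set b := dist (T x) (T (T x)) with hb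
    have ha0 : 0 ≤ a := dist_nonneg
    have hb0 : 0 ≤ b := dist_nonneg
    rcases h x (T x) with h1 | h2 | h3
    · calc b ≤ α * a := h1
        _ ≤ c * a := by apply mul_le_mul_of_nonneg_right (le_max_left _ _) ha0
    · have : b ≤ β / (1 - β) * a := by
        rw [div_mul_eq_mul_div, le_div_iff₀ hβ1']
        nlinarith
      calc b ≤ β / (1 - β) * a := this
        _ ≤ c * a := by
            apply mul_le_mul_of_nonneg_right (le_trans (le_max_left _ _) (le_max_right _ _)) ha0
    · have hxy : dist x (T (T x)) ≤ a + b := dist_triangle x (T x) (T (T x))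
      have h3' : b ≤ γ * (a + b) := by
        calc b ≤ γ * (dist x (T (T x)) + dist (T x) (T x)) := h3
          _ = γ * dist x (T (T x)) := by rw [dist_self]; ring
          _ ≤ γ * (a + b) := by apply mul_le_mul_of_nonneg_left hxy hγ0
      have : b ≤ γ / (1 - γ) * a := by
        rw [div_mul_eq_mul_div, le_div_iff₀ hγ1']
        nlinarith
      calc b ≤ γ / (1 - γ) * a := this
        _ ≤ c * a := by
            apply mul_le_mul_of_nonneg_right (le_trans (le_max_right _ _) (le_max_right _ _)) ha0
  -- every Picard sequence converges to a fixed point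
  have key : ∀ x₀ : X, ∃ p : X,
      Filter.Tendsto (fun n => T^[n] x₀) Filter.atTop (nhds p) ∧ T p = p := by
    intro x₀
    set f : ℕ → X := fun n => T^[n] x₀ with hf
    have hfs : ∀ n, f (n + 1) = T (f n) := by
      intro n; simp [hf, Function.iterate_succ_apply']
    have hgeo : ∀ n, dist (f n) (f (n + 1)) ≤ dist x₀ (T x₀) * c ^ n := by
      intro n
      induction n with
      | zero => simp [hfs 0, hf]
      | succ k ih =>
        have := hstep (f k)
        rw [← hfs k, ← hfs (k+1)] at this
        calc dist (f (k+1)) (f (k+2)) ≤ c * dist (f k) (f (k+1)) := this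
          _ ≤ c * (dist x₀ (T x₀) * c ^ k) := by
              apply mul_le_mul_of_nonneg_left ih hc0
          _ = dist x₀ (T x₀) * c ^ (k+1) := by ring
    have hcauchy : CauchySeq f := cauchySeq_of_le_geometric c _ hc1 hgeo
    obtain ⟨p, hp⟩ := cauchySeq_tendsto_of_complete hcauchy
    refine ⟨p, hp, ?_⟩
    -- show T p = p
    have hp' : Filter.Tendsto (fun n => f (n + 1)) Filter.atTop (nhds p) :=
      hp.comp (Filter.tendsto_add_atTop_nat 1)
    set E : ℕ → ℝ := fun n => dist (f n) p + dist (f (n+1)) p + dist (f n) (f (n+1)) with hE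
    have hEtendsto : Filter.Tendsto E Filter.atTop (nhds 0) := by
      have h1 : Filter.Tendsto (fun n => dist (f n) p) Filter.atTop (nhds 0) := by
        simpa using hp.dist (tendsto_const_nhds (x := p))
      have h2 : Filter.Tendsto (fun n => dist (f (n+1)) p) Filter.atTop (nhds 0) := by
        simpa using hp'.dist (tendsto_const_nhds (x := p))
      have h3 : Filter.Tendsto (fun n => dist (f n) (f (n+1))) Filter.atTop (nhds 0) := by
        simpa using hp.dist hp'
      simpa using (h1.add h2).add h3
    set D := dist (T p) p with hD
    have hD0 : 0 ≤ D := dist_nonneg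
    have hbound : ∀ n, D / 2 ≤ 2 * E n := by
      intro n
      have htri : D ≤ dist (T p) (f (n+1)) + dist (f (n+1)) p := dist_triangle _ _ _
      have hEn1 : 0 ≤ dist (f n) p := dist_nonneg
      have hEn2 : 0 ≤ dist (f (n+1)) p := dist_nonneg
      have hEn3 : 0 ≤ dist (f n) (f (n+1)) := dist_nonneg
      rcases h p (f n) with h1 | h2 | h3
      · rw [← hfs n] at h1
        have : dist (T p) (f (n+1)) ≤ α * dist p (f n) := h1
        rw [dist_comm p (f n)] at this
        have hα1' : α * dist (f n) p ≤ dist (f n) p := by nlinarith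
        show D / 2 ≤ 2 * (dist (f n) p + dist (f (n+1)) p + dist (f n) (f (n+1)))
        linarith
      · rw [← hfs n] at h2
        have h2' : dist (T p) (f (n+1)) ≤ β * (dist p (T p) + dist (f n) (f (n+1))) := h2
        rw [dist_comm p (T p)] at h2'
        have hβD : β * D ≤ D / 2 := by nlinarith
        have hβd : β * dist (f n) (f (n+1)) ≤ dist (f n) (f (n+1)) := by nlinarith
        show D / 2 ≤ 2 * (dist (f n) p + dist (f (n+1)) p + dist (f n) (f (n+1)))
        linarith
      · rw [← hfs n] at h3
        have h3' : dist (T p) (f (n+1)) ≤ γ * (dist p (f (n+1)) + dist (f n) (T p)) := h3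
        have ht : dist (f n) (T p) ≤ dist (f n) p + D := by
          rw [hD, dist_comm (T p) p]; exact dist_triangle _ _ _
        rw [dist_comm p (f (n+1))] at h3'
        have hγD : γ * D ≤ D / 2 := by nlinarith
        have hγ1'' : γ * dist (f (n+1)) p ≤ dist (f (n+1)) p := by nlinarith
        have hγ2'' : γ * dist (f n) p ≤ dist (f n) p := by nlinarith
        have hkey : dist (T p) (f (n+1)) ≤ γ * dist (f (n+1)) p + γ * dist (f n) p + γ * D := by
          calc dist (T p) (f (n+1)) ≤ γ * (dist (f (n+1)) p + dist (f n) (T p)) := h3'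
            _ ≤ γ * (dist (f (n+1)) p + (dist (f n) p + D)) := by
                apply mul_le_mul_of_nonneg_left _ hγ0; linarith
            _ = γ * dist (f (n+1)) p + γ * dist (f n) p + γ * D := by ring
        show D / 2 ≤ 2 * (dist (f n) p + dist (f (n+1)) p + dist (f n) (f (n+1)))
        linarith
    have hle : D / 2 ≤ 2 * 0 := by
      refine ge_of_tendsto (hEtendsto.const_mul 2) ?_
      exact Filter.Eventually.of_forall hbound
    have : D = 0 := by linarith
    have : dist (T p) p = 0 := this
    exact dist_eq_zero.mp this
  -- uniqueness of fixed points
  have huniq : ∀ p q : X, T p = p → T q = q → p = q := by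
    intro p q hp hq
    have hd : dist p q = dist (T p) (T q) := by rw [hp, hq]
    rcases h p q with h1 | h2 | h3
    · rw [← hd] at h1
      have : dist p q = 0 := by nlinarith [dist_nonneg (x := p) (y := q)]
      exact dist_eq_zero.mp this
    · rw [hp, hq, dist_self, dist_self] at h2
      rw [show β * ((0:ℝ) + 0) = 0 by ring] at h2
      have : dist p q = 0 := le_antisymm (by linarith) dist_nonneg
      exact dist_eq_zero.mp this
    · rw [hp, hq, dist_comm q p] at h3
      have : dist p q = 0 := by nlinarith [dist_nonneg (x := p) (y := q)]
      exact dist_eq_zero.mp this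
  obtain ⟨x₀⟩ := ‹Nonempty X›
  obtain ⟨p, hptend, hpfix⟩ := key x₀
  refine ⟨p, hpfix, fun q hq => huniq q p hq hpfix, fun y₀ => ?_⟩
  obtain ⟨q, hqtend, hqfix⟩ := key y₀
  rwa [huniq q p hqfix hpfix] at hqtend
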